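/- With β_{2k} = d^{k−1}α₂, β_{2k+1} = d^k α₁ and mₙ = ∑_{π ∈ I(n)} β_π, the sequence γ_{o,k} = ∑_{π ∈ I_o(k)} β_π (first block of odd size) satisfies the linear recurrence γ_{o,k+2} − α₁ γ_{o,k+1} − (d + α₂) γ_{o,k} = 0, with γ_{o,1} = α₁ and γ_{o,2} = α₁², and hence γ_{o,k} = (α₁/ω)((α₁+ω)/2)^k − (α₁/ω)((α₁−ω)/2)^k where ω = √(α₁² + 4(d + α₂)). -/

import Mathlib

open Finset
open scoped Classical

/-- Partitions of `{1, ..., n}` (modelled as finpartitions of `Finset.univ : Finset (Fin n)`). -/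
abbrev FP (n : ℕ) := Finpartition (Finset.univ : Finset (Fin n))

/-- A partition is an interval partition if each of its blocks is an interval. -/
def IsIntervalPart {n : ℕ} (P : FP n) : Prop :=
  ∀ B ∈ P.parts, ∀ a b c : Fin n, a ∈ B → c ∈ B → a ≤ b → b ≤ c → b ∈ B

/-- The set `I(n)` of interval partitions of `[n]`. -/
noncomputable def intSet (n : ℕ) : Finset (FP n) := Finset.univ.filter IsIntervalPart

/-- The multiplicative weight `β_π = ∏_{V ∈ π} β_{|V|}` of a partition. -/
noncomputable def wt (βf : ℕ → ℂ) {n : ℕ} (P : FP n) : ℂ := ∏ B ∈ P.parts, βf B.card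

/-- `mₙ = ∑_{π ∈ I(n)} β_π`, the moments attached to the cumulant sequence `βf`. -/
noncomputable def mSeq (βf : ℕ → ℂ) (n : ℕ) : ℂ := ∑ P ∈ intSet n, wt βf P

/-- `γ_{o,k}`: the sum of `β_π` over interval partitions of `[k]` whose first block
(the block containing the first element) has odd size. -/
noncomputable def gammaO (βf : ℕ → ℂ) (k : ℕ) : ℂ :=
  ∑ P ∈ (intSet k).filter
      (fun P => ∃ B ∈ P.parts, ∃ h : 0 < k, (⟨0, h⟩ : Fin k) ∈ B ∧ Odd B.card),
    wt βf P

/-- `γ_{e,k}`: the sum of `β_π` over interval partitions of `[k]` whose first block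
has even size. -/
noncomputable def gammaE (βf : ℕ → ℂ) (k : ℕ) : ℂ :=
  ∑ P ∈ (intSet k).filter
      (fun P => ∃ B ∈ P.parts, ∃ h : 0 < k, (⟨0, h⟩ : Fin k) ∈ B ∧ Even B.card),
    wt βf P

namespace Stmt16Aux

lemma parts_eq_image_part {n : ℕ} (P : FP n) : P.parts = univ.image P.part := by
  ext B
  simp only [Finset.mem_image, mem_univ, true_and]
  constructor
  · intro hB
    obtain ⟨a, ha⟩ := P.nonempty_of_mem_parts hB
    exact ⟨a, (P.part_eq_of_mem hB ha)⟩
  · rintro ⟨a, rfl⟩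
    exact P.part_mem.mpr (mem_univ a)

lemma part_ext {n : ℕ} {P Q : FP n} (h : ∀ a, P.part a = Q.part a) : P = Q := by
  apply Finpartition.ext
  rw [parts_eq_image_part, parts_eq_image_part]
  exact Finset.image_congr fun a _ => h a

lemma card_filter_lt (n k : ℕ) (hk : k ≤ n) :
    (univ.filter fun t : Fin n => (t : ℕ) < k).card = k := by
  have himg : (univ.filter fun t : Fin n => (t : ℕ) < k).image Fin.val = Finset.range k := by
    ext y
    simp only [Finset.mem_image, mem_filter, mem_univ, true_and, Finset.mem_range]
    constructor
    · rintro ⟨t, ht, rfl⟩; exact ht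
    · intro hy; exact ⟨⟨y, by omega⟩, hy, rfl⟩
  rw [← Finset.card_image_of_injective _ Fin.val_injective, himg, Finset.card_range]

lemma dc_eq_filter {n j : ℕ} (B : Finset (Fin n))
    (hdc : ∀ x ∈ B, ∀ y : Fin n, y ≤ x → y ∈ B) (hcard : B.card = j) :
    B = univ.filter (fun t : Fin n => (t : ℕ) < j) := by
  have hiff : ∀ x : Fin n, x ∈ B ↔ (x : ℕ) < j := by
    intro x
    constructor
    · intro hx
      have hsub : Finset.range ((x : ℕ) + 1) ⊆ B.image Fin.val := by
        intro y hy
        rw [Finset.mem_range, Nat.lt_succ_iff] at hy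
        have hy' : y < n := lt_of_le_of_lt hy x.isLt
        exact Finset.mem_image.mpr ⟨⟨y, hy'⟩, hdc x hx ⟨y, hy'⟩ (by simp [Fin.le_def, hy]), rfl⟩
      have := Finset.card_le_card hsub
      rw [Finset.card_range, Finset.card_image_of_injective _ Fin.val_injective, hcard] at this
      omega
    · intro hxj
      by_contra hx
      have hsub : B ⊆ univ.filter (fun t : Fin n => (t : ℕ) < (x : ℕ)) := by
        intro b hb
        simp only [mem_filter, mem_univ, true_and]
        by_contra hbx
        push_neg at hbx
        exact hx (hdc b hb x (by rw [Fin.le_def]; omega))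
      have := Finset.card_le_card hsub
      rw [hcard, card_filter_lt n _ (le_of_lt x.isLt)] at this
      omega
  ext t
  simp only [mem_filter, mem_univ, true_and]
  exact hiff t


variable {j m : ℕ}

def fup (j m : ℕ) (x : Fin m) : Fin (j + m) := ⟨j + x.val, by omega⟩

lemma fup_inj : Function.Injective (fup j m) := by
  intro a b h
  have := congrArg Fin.val h
  simp only [fup] at this
  exact Fin.ext (by omega)

lemma fup_val (x : Fin m) : (fup j m x : ℕ) = j + x.val := rfl

def relF (j : ℕ) {m : ℕ} (Q : FP m) : Setoid (Fin (j + m)) where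
  r x y := ((x : ℕ) < j ∧ (y : ℕ) < j) ∨
    ∃ a b : Fin m, x = fup j m a ∧ y = fup j m b ∧ Q.part a = Q.part b
  iseqv := by
    constructor
    · intro x
      by_cases hx : (x : ℕ) < j
      · exact Or.inl ⟨hx, hx⟩
      · exact Or.inr ⟨⟨x - j, by omega⟩, ⟨x - j, by omega⟩,
          Fin.ext (by simp [fup]; omega), Fin.ext (by simp [fup]; omega), rfl⟩
    · rintro x y (⟨h1, h2⟩ | ⟨a, b, ha, hb, h⟩)
      · exact Or.inl ⟨h2, h1⟩
      · exact Or.inr ⟨b, a, hb, ha, h.symm⟩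
    · rintro x y z (⟨h1, h2⟩ | ⟨a, b, ha, hb, h⟩) (⟨h1', h2'⟩ | ⟨a', b', ha', hb', h'⟩)
      · exact Or.inl ⟨h1, h2'⟩
      · exfalso; rw [ha'] at h2; simp [fup_val] at h2
      · exfalso; rw [hb] at h1'; simp [fup_val] at h1'
      · refine Or.inr ⟨a, b', ha, hb', ?_⟩
        have : b = a' := fup_inj (by rw [← hb, ← ha'])
        rw [h, this, h']

noncomputable def FF (j : ℕ) {m : ℕ} (Q : FP m) : FP (j + m) :=
  Finpartition.ofSetoid (relF j Q)

lemma partFF_lt (Q : FP m) (x : Fin (j + m)) (hx : (x : ℕ) < j) :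
    (FF j Q).part x = univ.filter fun t : Fin (j + m) => (t : ℕ) < j := by
  ext t
  rw [FF, Finpartition.mem_part_ofSetoid_iff_rel]
  simp only [mem_filter, mem_univ, true_and]
  constructor
  · rintro (⟨_, ht⟩ | ⟨a, b, ha, rfl, _⟩)
    · exact ht
    · exfalso; rw [ha] at hx; simp [fup_val] at hx
  · intro ht; exact Or.inl ⟨hx, ht⟩

lemma partFF_fup (Q : FP m) (a : Fin m) :
    (FF j Q).part (fup j m a) = (Q.part a).image (fup j m) := by
  ext t
  rw [FF, Finpartition.mem_part_ofSetoid_iff_rel, Finset.mem_image]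
  constructor
  · rintro (⟨h1, _⟩ | ⟨a', b, ha', rfl, hpart⟩)
    · exfalso; simp [fup_val] at h1
    · have haa : a = a' := fup_inj ha'
      refine ⟨b, ?_, rfl⟩
      rw [Q.mem_part_iff_part_eq_part (mem_univ b) (mem_univ a)]
      rw [haa, hpart]
  · rintro ⟨b, hb, rfl⟩
    refine Or.inr ⟨a, b, rfl, rfl, ?_⟩
    exact ((Q.mem_part_iff_part_eq_part (mem_univ b) (mem_univ a)).mp hb).symm

lemma partsFF (Q : FP m) (hj : 1 ≤ j) :
    (FF j Q).parts = insert (univ.filter fun t : Fin (j + m) => (t : ℕ) < j)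
      (Q.parts.image fun C => C.image (fup j m)) := by
  ext B
  simp only [mem_insert, Finset.mem_image]
  constructor
  · intro hB
    obtain ⟨a, ha⟩ := (FF j Q).nonempty_of_mem_parts hB
    have hBa : B = (FF j Q).part a := ((FF j Q).part_eq_of_mem hB ha).symm
    by_cases hax : (a : ℕ) < j
    · left; rw [hBa, partFF_lt _ _ hax]
    · right
      refine ⟨Q.part ⟨a - j, by omega⟩, Q.part_mem.mpr (mem_univ _), ?_⟩
      have hae : a = fup j m ⟨(a : ℕ) - j, by omega⟩ := Fin.ext (by simp [fup]; omega)
      exact (partFF_fup Q _).symm.trans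
        ((congrArg (FF j Q).part hae.symm).trans hBa.symm)
  · rintro (rfl | ⟨C, hC, rfl⟩)
    · have h0 : ((⟨0, by omega⟩ : Fin (j + m)) : ℕ) < j := hj
      rw [← partFF_lt Q ⟨0, by omega⟩ h0]
      exact (FF j Q).part_mem.mpr (mem_univ _)
    · obtain ⟨c, hc⟩ := Q.nonempty_of_mem_parts hC
      have hCc : C = Q.part c := (Q.part_eq_of_mem hC hc).symm
      rw [hCc, ← partFF_fup]
      exact (FF j Q).part_mem.mpr (mem_univ _)

lemma wtFF (βf : ℕ → ℂ) (Q : FP m) (hj : 1 ≤ j) :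
    wt βf (FF j Q) = βf j * wt βf Q := by
  have hnot : (univ.filter fun t : Fin (j + m) => (t : ℕ) < j) ∉
      Q.parts.image fun C => C.image (fup j m) := by
    intro h
    obtain ⟨C, _, hCB⟩ := Finset.mem_image.mp h
    have h0 : (⟨0, by omega⟩ : Fin (j + m)) ∈
        univ.filter fun t : Fin (j + m) => (t : ℕ) < j := by
      simp only [mem_filter, mem_univ, true_and]; exact hj
    rw [← hCB] at h0
    obtain ⟨b, _, hb⟩ := Finset.mem_image.mp h0
    have := congrArg Fin.val hb
    simp [fup_val] at this
    omega
  rw [wt, partsFF Q hj, Finset.prod_insert hnot,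
    card_filter_lt _ j (by omega),
    Finset.prod_image (fun C1 _ C2 _ h => Finset.image_injective fup_inj h)]
  congr 1
  apply Finset.prod_congr rfl
  intro C _
  rw [Finset.card_image_of_injective _ fup_inj]

def relG (j : ℕ) {m : ℕ} (P : FP (j + m)) : Setoid (Fin m) where
  r a b := P.part (fup j m a) = P.part (fup j m b)
  iseqv := ⟨fun _ => rfl, Eq.symm, Eq.trans⟩

noncomputable def GG (j : ℕ) {m : ℕ} (P : FP (j + m)) : FP m :=
  Finpartition.ofSetoid (relG j P)

lemma partGG (P : FP (j + m)) (a : Fin m) :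
    (GG j P).part a = univ.filter fun b => P.part (fup j m a) = P.part (fup j m b) := by
  ext b
  rw [GG, Finpartition.mem_part_ofSetoid_iff_rel]
  simp only [mem_filter, mem_univ, true_and]
  exact Iff.rfl

lemma GG_FF (Q : FP m) : GG j (FF j Q) = Q := by
  apply part_ext; intro a
  rw [partGG]
  ext b
  simp only [mem_filter, mem_univ, true_and]
  rw [partFF_fup, partFF_fup]
  constructor
  · intro h
    have hq : Q.part a = Q.part b := Finset.image_injective fup_inj h
    exact (Q.mem_part_iff_part_eq_part (mem_univ b) (mem_univ a)).mpr hq.symm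
  · intro hb
    rw [Q.part_eq_of_mem (Q.part_mem.mpr (mem_univ a)) hb]

lemma first_block {P : FP (j + m)} (hP : IsIntervalPart P) (hj : 1 ≤ j)
    (hcard : (P.part ⟨0, by omega⟩).card = j) :
    ∀ x : Fin (j + m), (x : ℕ) < j →
      P.part x = univ.filter fun t : Fin (j + m) => (t : ℕ) < j := by
  set z0 : Fin (j + m) := ⟨0, by omega⟩ with hz0
  have hz0mem : z0 ∈ P.part z0 := P.mem_part (mem_univ _)
  have hdc : ∀ x ∈ P.part z0, ∀ y : Fin (j + m), y ≤ x → y ∈ P.part z0 := by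
    intro x hx y hy
    exact hP _ (P.part_mem.mpr (mem_univ _)) z0 y x hz0mem hx
      (by rw [Fin.le_def]; simp [hz0]) hy
  have hB0 := dc_eq_filter _ hdc hcard
  intro x hx
  have hxB : x ∈ P.part z0 := by rw [hB0]; simp only [mem_filter, mem_univ, true_and]; exact hx
  rw [P.part_eq_of_mem (P.part_mem.mpr (mem_univ z0)) hxB, hB0]

lemma FF_GG {P : FP (j + m)} (hP : IsIntervalPart P) (hj : 1 ≤ j)
    (hcard : (P.part ⟨0, by omega⟩).card = j) : FF j (GG j P) = P := by
  have hfb := first_block hP hj hcard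
  apply part_ext; intro x
  by_cases hx : (x : ℕ) < j
  · rw [partFF_lt _ _ hx, hfb x hx]
  · have hxe : x = fup j m ⟨(x : ℕ) - j, by omega⟩ := Fin.ext (by simp [fup]; omega)
    rw [hxe, partFF_fup, partGG]
    set a : Fin m := ⟨(x : ℕ) - j, by omega⟩
    ext t
    simp only [Finset.mem_image, mem_filter, mem_univ, true_and]
    constructor
    · rintro ⟨b, hb, rfl⟩
      rw [hb]
      exact P.mem_part (mem_univ _)
    · intro ht
      have hpt : P.part t = P.part (fup j m a) :=
        P.part_eq_of_mem (P.part_mem.mpr (mem_univ _)) ht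
      have htj : j ≤ (t : ℕ) := by
        by_contra hlt
        push_neg at hlt
        have h1 := hfb t hlt
        have h2 : fup j m a ∈ P.part (fup j m a) := P.mem_part (mem_univ _)
        rw [← hpt, h1] at h2
        simp only [mem_filter, mem_univ, true_and, fup_val] at h2
        omega
      refine ⟨⟨(t : ℕ) - j, by omega⟩, ?_, Fin.ext (by simp [fup]; omega)⟩
      have hte : t = fup j m ⟨(t : ℕ) - j, by omega⟩ := Fin.ext (by simp [fup]; omega)
      rw [← hte, hpt]

lemma GG_interval {P : FP (j + m)} (hP : IsIntervalPart P) :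
    IsIntervalPart (GG j P) := by
  intro B hB a b c ha hc hab hbc
  have hBa : (GG j P).part a = B := (GG j P).part_eq_of_mem hB ha
  rw [← hBa] at hc ⊢
  rw [partGG] at hc ⊢
  simp only [mem_filter, mem_univ, true_and] at hc ⊢
  have hfa : fup j m a ∈ P.part (fup j m a) := P.mem_part (mem_univ _)
  have hfc : fup j m c ∈ P.part (fup j m a) := by
    rw [hc]; exact P.mem_part (mem_univ _)
  have hfb : fup j m b ∈ P.part (fup j m a) := by
    refine hP _ (P.part_mem.mpr (mem_univ _)) _ _ _ hfa hfc ?_ ?_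
    · rw [Fin.le_def, fup_val, fup_val]; rw [Fin.le_def] at hab; omega
    · rw [Fin.le_def, fup_val, fup_val]; rw [Fin.le_def] at hbc; omega
  exact (P.part_eq_of_mem (P.part_mem.mpr (mem_univ _)) hfb).symm

lemma FF_interval (Q : FP m) (hQ : IsIntervalPart Q) (hj : 1 ≤ j) :
    IsIntervalPart (FF j Q) := by
  intro B hB a b c ha hc hab hbc
  rw [partsFF Q hj] at hB
  rcases Finset.mem_insert.mp hB with rfl | hB'
  · simp only [mem_filter, mem_univ, true_and] at hc ⊢
    rw [Fin.le_def] at hbc; omega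
  · obtain ⟨C, hC, rfl⟩ := Finset.mem_image.mp hB'
    obtain ⟨a', ha', rfl⟩ := Finset.mem_image.mp ha
    obtain ⟨c', hc', rfl⟩ := Finset.mem_image.mp hc
    rw [Fin.le_def, fup_val] at hab hbc
    have hbj : j ≤ (b : ℕ) := by omega
    set b' : Fin m := ⟨(b : ℕ) - j, by omega⟩ with hb'
    have hbe : b = fup j m b' := Fin.ext (by show (b : ℕ) = j + ((b : ℕ) - j); omega)
    rw [hbe]
    refine Finset.mem_image.mpr ⟨b', ?_, rfl⟩
    exact hQ C hC a' b' c' ha' hc' (by rw [Fin.le_def]; simp [hb']; omega)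
      (by rw [Fin.le_def]; simp [hb']; omega)

lemma FF_card (Q : FP m) (hj : 1 ≤ j) :
    ((FF j Q).part ⟨0, by omega⟩).card = j := by
  rw [partFF_lt Q ⟨0, by omega⟩ (by show 0 < j; omega), card_filter_lt _ j (by omega)]


lemma mem_intSet {n : ℕ} {P : FP n} : P ∈ intSet n ↔ IsIntervalPart P := by
  simp [intSet]

lemma sumFirst (βf : ℕ → ℂ) (n jj : ℕ) (hj : 1 ≤ jj) (hjn : jj ≤ n) (hn : 0 < n) :
    ∑ P ∈ (intSet n).filter (fun P => (P.part ⟨0, hn⟩).card = jj), wt βf P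
      = βf jj * mSeq βf (n - jj) := by
  obtain ⟨m, rfl⟩ : ∃ m, n = jj + m := ⟨n - jj, by omega⟩
  have hmm : jj + m - jj = m := by omega
  rw [hmm, mSeq, Finset.mul_sum]
  refine Finset.sum_nbij' (GG jj) (FF jj) ?_ ?_ ?_ ?_ ?_
  · intro P hP
    rw [Finset.mem_filter, mem_intSet] at hP
    exact mem_intSet.mpr (GG_interval hP.1)
  · intro Q hQ
    rw [mem_intSet] at hQ
    rw [Finset.mem_filter, mem_intSet]
    exact ⟨FF_interval Q hQ hj, FF_card Q hj⟩
  · intro P hP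
    rw [Finset.mem_filter, mem_intSet] at hP
    exact FF_GG hP.1 hj hP.2
  · intro Q _
    exact GG_FF Q
  · intro P hP
    rw [Finset.mem_filter, mem_intSet] at hP
    conv_lhs => rw [← FF_GG hP.1 hj hP.2]
    exact wtFF βf (GG jj P) hj

lemma gammaO_cond {n : ℕ} (hn : 0 < n) (P : FP n) :
    (∃ B ∈ P.parts, ∃ h : 0 < n, (⟨0, h⟩ : Fin n) ∈ B ∧ Odd B.card)
      ↔ Odd ((P.part ⟨0, hn⟩).card) := by
  constructor
  · rintro ⟨B, hB, h, h0, hodd⟩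
    rwa [P.part_eq_of_mem hB h0]
  · intro h
    exact ⟨P.part ⟨0, hn⟩, P.part_mem.mpr (mem_univ _), hn, P.mem_part (mem_univ _), h⟩

lemma gammaE_cond {n : ℕ} (hn : 0 < n) (P : FP n) :
    (∃ B ∈ P.parts, ∃ h : 0 < n, (⟨0, h⟩ : Fin n) ∈ B ∧ Even B.card)
      ↔ Even ((P.part ⟨0, hn⟩).card) := by
  constructor
  · rintro ⟨B, hB, h, h0, heven⟩
    rwa [P.part_eq_of_mem hB h0]
  · intro h
    exact ⟨P.part ⟨0, hn⟩, P.part_mem.mpr (mem_univ _), hn, P.mem_part (mem_univ _), h⟩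

lemma card_part_mem {n : ℕ} (hn : 0 < n) (P : FP n) {p : ℕ → Prop}
    (hp : p ((P.part ⟨0, hn⟩).card)) :
    (P.part (⟨0, hn⟩ : Fin n)).card ∈ (Icc 1 n).filter p := by
  rw [Finset.mem_filter, Finset.mem_Icc]
  refine ⟨⟨?_, ?_⟩, hp⟩
  · have : (⟨0, hn⟩ : Fin n) ∈ P.part ⟨0, hn⟩ := P.mem_part (mem_univ _)
    exact Finset.card_pos.mpr ⟨_, this⟩
  · calc (P.part ⟨0, hn⟩).card ≤ (univ : Finset (Fin n)).card :=
          Finset.card_le_card (Finset.subset_univ _)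
      _ = n := by simp

lemma gamma_formula (βf : ℕ → ℂ) {n : ℕ} (hn : 0 < n) (p : ℕ → Prop)
    (s : Finset (FP n))
    (hs : ∀ P, P ∈ s ↔ P ∈ intSet n ∧ p ((P.part ⟨0, hn⟩).card))
    (t : Finset ℕ) (ht : ∀ jj, jj ∈ t ↔ (1 ≤ jj ∧ jj ≤ n) ∧ p jj) :
    ∑ P ∈ s, wt βf P
      = ∑ jj ∈ t, βf jj * mSeq βf (n - jj) := by
  have hte : t = (Icc 1 n).filter p := by
    ext jj
    rw [Finset.mem_filter, Finset.mem_Icc]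
    exact ht jj
  rw [hte]
  have hfe : s = (intSet n).filter (fun P => p ((P.part ⟨0, hn⟩).card)) := by
    ext P
    rw [Finset.mem_filter]
    exact hs P
  rw [hfe]
  rw [← Finset.sum_fiberwise_of_maps_to
    (g := fun P : FP n => (P.part (⟨0, hn⟩ : Fin n)).card)
    (t := (Icc 1 n).filter p)
    (fun P hP => card_part_mem hn P (Finset.mem_filter.mp hP).2)]
  apply Finset.sum_congr rfl
  intro jj hjj
  rw [Finset.mem_filter, Finset.mem_Icc] at hjj
  have hsets : ((intSet n).filter (fun P => p ((P.part ⟨0, hn⟩).card))).filter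
      (fun P => (P.part ⟨0, hn⟩).card = jj)
      = (intSet n).filter (fun P => (P.part ⟨0, hn⟩).card = jj) := by
    rw [Finset.filter_filter]
    apply Finset.filter_congr
    intro P _
    constructor
    · rintro ⟨_, h⟩; exact h
    · intro h; exact ⟨h ▸ hjj.2, h⟩
  rw [hsets, sumFirst βf n jj hjj.1.1 hjj.1.2 hn]

set_option maxHeartbeats 1000000 in
lemma gammaO_eq (βf : ℕ → ℂ) {n : ℕ} (hn : 0 < n) :
    gammaO βf n = ∑ jj ∈ (Icc 1 n).filter Odd, βf jj * mSeq βf (n - jj) := by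
  rw [gammaO]
  refine gamma_formula βf hn Odd _ (fun P => ?_) _ (fun jj => ?_)
  · rw [Finset.mem_filter]
    exact and_congr_right fun _ => gammaO_cond hn P
  · rw [Finset.mem_filter, Finset.mem_Icc]

set_option maxHeartbeats 1000000 in
lemma gammaE_eq (βf : ℕ → ℂ) {n : ℕ} (hn : 0 < n) :
    gammaE βf n = ∑ jj ∈ (Icc 1 n).filter Even, βf jj * mSeq βf (n - jj) := by
  rw [gammaE]
  refine gamma_formula βf hn Even _ (fun P => ?_) _ (fun jj => ?_)
  · rw [Finset.mem_filter]
    exact and_congr_right fun _ => gammaE_cond hn P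
  · rw [Finset.mem_filter, Finset.mem_Icc]

lemma mSeq_split (βf : ℕ → ℂ) {n : ℕ} (hn : 0 < n) :
    mSeq βf n = gammaO βf n + gammaE βf n := by
  rw [mSeq, gammaO, gammaE]
  rw [← Finset.sum_filter_add_sum_filter_not (intSet n)
    (fun P => ∃ B ∈ P.parts, ∃ h : 0 < n, (⟨0, h⟩ : Fin n) ∈ B ∧ Odd B.card) (wt βf)]
  congr 1
  apply Finset.sum_congr _ (fun _ _ => rfl)
  apply Finset.filter_congr
  intro P _
  rw [gammaO_cond hn P, gammaE_cond hn P, Nat.not_even_iff_odd.symm]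
  tauto

section Alg
variable {α₁ α₂ d : ℂ} {βf : ℕ → ℂ}
variable (hβe : ∀ k : ℕ, 1 ≤ k → βf (2 * k) = d ^ (k - 1) * α₂)
variable (hβo : ∀ k : ℕ, βf (2 * k + 1) = d ^ k * α₁)

include hβe hβo in
lemma βf_step : ∀ i, 1 ≤ i → βf (i + 2) = d * βf i := by
  intro i hi
  rcases Nat.even_or_odd i with ⟨t, ht⟩ | ⟨t, ht⟩
  · have ht' : i = 2 * t := by omega
    have htp : 1 ≤ t := by omega
    rw [show i + 2 = 2 * (t + 1) by omega, hβe (t + 1) (by omega), ht', hβe t htp]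
    obtain ⟨s, rfl⟩ : ∃ s, t = s + 1 := ⟨t - 1, by omega⟩
    simp [pow_succ]
    ring
  · rw [show i + 2 = 2 * (t + 1) + 1 by omega, hβo (t + 1), show i = 2 * t + 1 by omega, hβo t]
    rw [pow_succ]
    ring

include hβe hβo in
lemma βf_odd_even : ∀ i, Odd i → α₁ * βf (i + 1) = α₂ * βf i := by
  rintro i ⟨t, rfl⟩
  rw [show 2 * t + 1 + 1 = 2 * (t + 1) by ring, hβe (t + 1) (by omega), hβo t]
  simp only [Nat.add_sub_cancel]
  ring

lemma odd_shift (n : ℕ) :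
    (Icc 1 (n + 2)).filter Odd = insert 1 (((Icc 1 n).filter Odd).image (· + 2)) := by
  ext x
  simp only [mem_filter, mem_Icc, mem_insert, Finset.mem_image, Nat.odd_iff]
  constructor
  · rintro ⟨⟨h1, h2⟩, h3⟩
    by_cases hx1 : x = 1
    · exact Or.inl hx1
    · exact Or.inr ⟨x - 2, ⟨⟨by omega, by omega⟩, by omega⟩, by omega⟩
  · rintro (rfl | ⟨a, ⟨⟨ha1, ha2⟩, ha3⟩, rfl⟩) <;> omega

lemma even_shift (n : ℕ) :
    (Icc 1 (n + 1)).filter Even = ((Icc 1 n).filter Odd).image (· + 1) := by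
  ext x
  simp only [mem_filter, mem_Icc, Finset.mem_image, Nat.odd_iff, Nat.even_iff]
  constructor
  · rintro ⟨⟨h1, h2⟩, h3⟩
    exact ⟨x - 1, ⟨⟨by omega, by omega⟩, by omega⟩, by omega⟩
  · rintro ⟨a, ⟨⟨ha1, ha2⟩, ha3⟩, rfl⟩
    omega

include hβe hβo in
lemma A_o (n : ℕ) (hn : 1 ≤ n) :
    gammaO βf (n + 2) = α₁ * mSeq βf (n + 1) + d * gammaO βf n := by
  have h1notin : (1 : ℕ) ∉ ((Icc 1 n).filter Odd).image (· + 2) := by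
    intro h
    obtain ⟨a, _, ha⟩ := Finset.mem_image.mp h
    omega
  rw [gammaO_eq βf (by omega : 0 < n + 2), odd_shift n, Finset.sum_insert h1notin,
    Finset.sum_image (by intro a _ b _ h; simp only at h; omega)]
  rw [gammaO_eq βf (by omega : 0 < n), Finset.mul_sum]
  have hβ1 : βf 1 = α₁ := by simpa using hβo 0
  congr 1
  · rw [hβ1]
    norm_num
  · apply Finset.sum_congr rfl
    intro i hi
    rw [Finset.mem_filter, Finset.mem_Icc] at hi
    rw [show n + 2 - (i + 2) = n - i by omega, βf_step hβe hβo i hi.1.1]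
    ring

include hβe hβo in
lemma B_e (n : ℕ) (hn : 1 ≤ n) :
    α₁ * gammaE βf (n + 1) = α₂ * gammaO βf n := by
  rw [gammaE_eq βf (by omega : 0 < n + 1), even_shift n,
    Finset.sum_image (by intro a _ b _ h; simp only at h; omega),
    gammaO_eq βf (by omega : 0 < n), Finset.mul_sum, Finset.mul_sum]
  apply Finset.sum_congr rfl
  intro i hi
  rw [Finset.mem_filter, Finset.mem_Icc, Nat.odd_iff] at hi
  rw [show n + 1 - (i + 1) = n - i by omega, ← mul_assoc, ← mul_assoc,
    βf_odd_even hβe hβo i (Nat.odd_iff.mpr hi.2)]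

include hβe hβo in
lemma gamma_rec (k : ℕ) (hk : 1 ≤ k) :
    gammaO βf (k + 2) = α₁ * gammaO βf (k + 1) + (d + α₂) * gammaO βf k := by
  have hA := A_o hβe hβo k hk
  have hm := mSeq_split βf (by omega : 0 < k + 1)
  have hB := B_e hβe hβo k hk
  rw [hA, hm]
  linear_combination hB
end Alg

lemma parts_empty (P : FP 0) : P.parts = ∅ := by
  rw [Finset.eq_empty_iff_forall_notMem]
  intro B hB
  obtain ⟨a, _⟩ := P.nonempty_of_mem_parts hB
  exact a.elim0

lemma mSeq_zero (βf : ℕ → ℂ) : mSeq βf 0 = 1 := by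
  have hP0 : ∃ P0 : FP 0, True := by
    refine ⟨⟨∅, ?_, ?_, ?_⟩, trivial⟩
    · exact Finset.supIndep_empty _
    · simp [Finset.eq_empty_iff_forall_notMem]
    · simp
  obtain ⟨P0, -⟩ := hP0
  have huniq : ∀ P : FP 0, P = P0 := fun P =>
    Finpartition.ext (by rw [parts_empty, parts_empty])
  have hint : intSet 0 = {P0} := by
    ext P
    simp only [intSet, Finset.mem_filter, mem_univ, true_and, Finset.mem_singleton]
    constructor
    · intro _; exact huniq P
    · intro _
      intro B hB a b c _ _ _ _
      exact a.elim0
  rw [mSeq, hint, Finset.sum_singleton, wt, parts_empty, Finset.prod_empty]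

section Vals
variable {α₁ α₂ d : ℂ} {βf : ℕ → ℂ}
variable (hβe : ∀ k : ℕ, 1 ≤ k → βf (2 * k) = d ^ (k - 1) * α₂)
variable (hβo : ∀ k : ℕ, βf (2 * k + 1) = d ^ k * α₁)

lemma filter_odd_one : (Icc 1 1).filter Odd = {1} := by
  ext x
  simp only [mem_filter, mem_Icc, Finset.mem_singleton, Nat.odd_iff]
  omega

lemma filter_even_one : (Icc 1 1).filter Even = ∅ := by
  ext x
  simp only [mem_filter, mem_Icc, Finset.notMem_empty, iff_false, Nat.even_iff, not_and]
  omega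

lemma filter_odd_two : (Icc 1 2).filter Odd = {1} := by
  ext x
  simp only [mem_filter, mem_Icc, Finset.mem_singleton, Nat.odd_iff]
  omega

include hβo in
lemma gammaO_one : gammaO βf 1 = α₁ := by
  rw [gammaO_eq βf one_pos, filter_odd_one, Finset.sum_singleton]
  simp only [Nat.sub_self, mSeq_zero, mul_one]
  simpa using hβo 0

lemma gammaE_one : gammaE βf 1 = 0 := by
  rw [gammaE_eq βf one_pos, filter_even_one, Finset.sum_empty]

include hβo in
lemma mSeq_one : mSeq βf 1 = α₁ := by
  rw [mSeq_split βf one_pos, gammaO_one hβo, gammaE_one, add_zero]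

include hβo in
lemma gammaO_two : gammaO βf 2 = α₁ ^ 2 := by
  rw [gammaO_eq βf two_pos, filter_odd_two, Finset.sum_singleton]
  have h1 : βf 1 = α₁ := by simpa using hβo 0
  rw [show (2 : ℕ) - 1 = 1 by omega, mSeq_one hβo, h1]
  ring
end Vals

section Closed
variable {α₁ α₂ d ω : ℂ}

noncomputable def cf (α₁ ω d α₂ : ℂ) (k : ℕ) : ℂ :=
  α₁ / ω * ((α₁ + ω) / 2) ^ k - α₁ / ω * ((α₁ - ω) / 2) ^ k

lemma cf_one (hω : ω ^ 2 = α₁ ^ 2 + 4 * (d + α₂)) (hω0 : ω ≠ 0) :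
    cf α₁ ω d α₂ 1 = α₁ := by
  rw [cf]
  field_simp
  ring

lemma cf_two (hω : ω ^ 2 = α₁ ^ 2 + 4 * (d + α₂)) (hω0 : ω ≠ 0) :
    cf α₁ ω d α₂ 2 = α₁ ^ 2 := by
  rw [cf]
  field_simp
  ring

lemma cf_rec (hω : ω ^ 2 = α₁ ^ 2 + 4 * (d + α₂)) (hω0 : ω ≠ 0) (k : ℕ) :
    cf α₁ ω d α₂ (k + 2) = α₁ * cf α₁ ω d α₂ (k + 1) + (d + α₂) * cf α₁ ω d α₂ k := by
  have hr1 : ((α₁ + ω) / 2) ^ (k + 2)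
      = α₁ * ((α₁ + ω) / 2) ^ (k + 1) + (d + α₂) * ((α₁ + ω) / 2) ^ k := by
    linear_combination (((α₁ + ω) / 2) ^ k / 4) * hω
  have hr2 : ((α₁ - ω) / 2) ^ (k + 2)
      = α₁ * ((α₁ - ω) / 2) ^ (k + 1) + (d + α₂) * ((α₁ - ω) / 2) ^ k := by
    linear_combination (((α₁ - ω) / 2) ^ k / 4) * hω
  simp only [cf]
  linear_combination (α₁ / ω) * hr1 - (α₁ / ω) * hr2
end Closed

end Stmt16Aux

/-- With `β_{2k} = d^{k−1}α₂`, `β_{2k+1} = d^k α₁`, the sequence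
`γ_{o,k} = ∑_{π ∈ I_o(k)} β_π` satisfies the recurrence
`γ_{o,k+2} − α₁ γ_{o,k+1} − (d + α₂) γ_{o,k} = 0` with `γ_{o,1} = α₁`,
`γ_{o,2} = α₁²`, and hence
`γ_{o,k} = (α₁/ω)((α₁+ω)/2)^k − (α₁/ω)((α₁−ω)/2)^k` where
`ω = √(α₁² + 4(d + α₂))`. -/
theorem stmt16 (α₁ α₂ d ω : ℂ) (hα₁ : α₁ ≠ 0) (hα₂ : α₂ ≠ 0)
    (hω : ω ^ 2 = α₁ ^ 2 + 4 * (d + α₂)) (hω0 : ω ≠ 0)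
    (βf : ℕ → ℂ)
    (hβe : ∀ k : ℕ, 1 ≤ k → βf (2 * k) = d ^ (k - 1) * α₂)
    (hβo : ∀ k : ℕ, βf (2 * k + 1) = d ^ k * α₁) :
    (∀ k : ℕ, 1 ≤ k →
      gammaO βf (k + 2) - α₁ * gammaO βf (k + 1) - (d + α₂) * gammaO βf k = 0) ∧
    gammaO βf 1 = α₁ ∧ gammaO βf 2 = α₁ ^ 2 ∧
    (∀ k : ℕ, 1 ≤ k →
      gammaO βf k = α₁ / ω * ((α₁ + ω) / 2) ^ k - α₁ / ω * ((α₁ - ω) / 2) ^ k) := by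
  have hrec : ∀ k : ℕ, 1 ≤ k →
      gammaO βf (k + 2) = α₁ * gammaO βf (k + 1) + (d + α₂) * gammaO βf k :=
    fun k hk => Stmt16Aux.gamma_rec hβe hβo k hk
  have h1 : gammaO βf 1 = α₁ := Stmt16Aux.gammaO_one hβo
  have h2 : gammaO βf 2 = α₁ ^ 2 := Stmt16Aux.gammaO_two hβo
  have hcf : ∀ k : ℕ, 1 ≤ k → gammaO βf k = Stmt16Aux.cf α₁ ω d α₂ k := by
    have key : ∀ k : ℕ, gammaO βf (k + 1) = Stmt16Aux.cf α₁ ω d α₂ (k + 1) ∧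
        gammaO βf (k + 2) = Stmt16Aux.cf α₁ ω d α₂ (k + 2) := by
      intro k
      induction k with
      | zero =>
        exact ⟨by rw [h1, Stmt16Aux.cf_one hω hω0],
          by rw [h2, Stmt16Aux.cf_two hω hω0]⟩
      | succ n ih =>
        constructor
        · have := ih.2
          rwa [show n + 2 = n + 1 + 1 by omega] at this
        · have hr := hrec (n + 1) (by omega)
          rw [show n + 1 + 2 = n + 3 by omega] at hr ⊢
          rw [show n + 1 + 1 = n + 2 by omega] at hr
          have hcr := Stmt16Aux.cf_rec (α₁ := α₁) (α₂ := α₂) (d := d) hω hω0 (n + 1)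
          rw [show n + 1 + 2 = n + 3 by omega, show n + 1 + 1 = n + 2 by omega] at hcr
          rw [hr, ih.1, ih.2, hcr]
    intro k hk
    obtain ⟨k', rfl⟩ : ∃ k', k = k' + 1 := ⟨k - 1, by omega⟩
    exact (key k').1
  refine ⟨fun k hk => by rw [hrec k hk]; ring, h1, h2, fun k hk => ?_⟩
  rw [hcf k hk, Stmt16Aux.cf]
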